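/- Let b be a non-zero integer, A a positive integer, and d ≥ 2 an integer. If n is a positive integer with n > 2·max(A, |b|), then b·n!·A^n is not a d-th power of an integer, i.e., there is no integer x with b·n!·A^n = x^d. -/

import Mathlib

/-- Let `b` be a non-zero integer, `A` a positive integer and `d ≥ 2` an
integer. If `n` is a positive integer with `n > 2 * max A |b|`, then `b * n! * A^n` is not a
`d`-th power of an integer. -/
theorem stmt_15 (b : ℤ) (hb : b ≠ 0) (A : ℕ) (hA : 0 < A) (d : ℕ) (hd : 2 ≤ d)
    (n : ℕ) (hn : 0 < n) (h : 2 * max A b.natAbs < n) :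
    ¬∃ x : ℤ, b * (n.factorial : ℤ) * (A : ℤ) ^ n = x ^ d := by
  rintro ⟨x, hx⟩
  -- pick a prime p with n/2 < p ≤ n
  obtain ⟨p, pp, hp1, hp2⟩ := Nat.exists_prime_lt_and_le_two_mul (n / 2) (by omega)
  haveI : Fact p.Prime := ⟨pp⟩
  have hpn : p ≤ n := le_trans hp2 (by omega)
  have hA' : A < p := by omega
  have hb' : b.natAbs < p := by omega
  have h2p : n < 2 * p := by omega
  have hp2sq : n < p ^ 2 := by nlinarith [pp.two_le]
  -- natAbs of the equation
  have hnat : b.natAbs * n.factorial * A ^ n = x.natAbs ^ d := by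
    have := congrArg Int.natAbs hx
    simpa [Int.natAbs_mul, Int.natAbs_pow] using this
  have hbne : b.natAbs ≠ 0 := Int.natAbs_ne_zero.mpr hb
  have hxne : x.natAbs ≠ 0 := by
    intro h0
    rw [h0, Nat.zero_pow (by omega)] at hnat
    exact absurd hnat (by positivity)
  -- Legendre: v_p(n!) = 1
  have hlog : Nat.log p n < 2 := Nat.log_lt_of_lt_pow (by omega) hp2sq
  have hfac : padicValNat p n.factorial = 1 := by
    rw [padicValNat_factorial hlog]
    have : Finset.Ico 1 2 = {1} := rfl
    rw [this, Finset.sum_singleton, pow_one]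
    exact Nat.div_eq_of_lt_le (by omega) (by omega)
  have hvb : padicValNat p b.natAbs = 0 :=
    padicValNat.eq_zero_of_not_dvd (fun hdvd => absurd (Nat.le_of_dvd (by omega) hdvd) (by omega))
  have hvA : padicValNat p A = 0 :=
    padicValNat.eq_zero_of_not_dvd (fun hdvd => absurd (Nat.le_of_dvd hA hdvd) (by omega))
  have hL : padicValNat p (b.natAbs * n.factorial * A ^ n) = 1 := by
    rw [padicValNat.mul (by positivity) (by positivity),
      padicValNat.mul hbne n.factorial_ne_zero, padicValNat.pow _ _, hvb, hvA, hfac]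
    omega
  have hR : padicValNat p (x.natAbs ^ d) = d * padicValNat p x.natAbs :=
    padicValNat.pow _ _
  rw [hnat, hR] at hL
  rcases Nat.eq_zero_or_pos (padicValNat p x.natAbs) with h0 | h0 <;> nlinarith
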